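/- For all non-negative integers m and n, the improper integral over t \in (0, \infty) of (1/t) * F_m(1/t) * F_n(t) dt, where F_n(t) := \sum_{k=0}^{n} k! * S(n,k) * (-t)^k / (1+t)^{k+1}, converges and equals the Bernoulli number B_{m+n}. -/

import Mathlib

/-- The Stirling numbers of the second kind `S(n,k)`, the number of ways of
partitioning a set of `n` elements into `k` nonempty sets. -/
def stirling2 : ℕ → ℕ → ℕ
  | 0, 0 => 1
  | 0, _ + 1 => 0
  | _ + 1, 0 => 0
  | n + 1, k + 1 => (k + 1) * stirling2 n (k + 1) + stirling2 n k

/-- The closed form `F n t` of the polylogarithm `Li_{-n}(-t)`. -/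
noncomputable def F (n : ℕ) (t : ℝ) : ℝ :=
  ∑ k ∈ Finset.range (n + 1),
    (Nat.factorial k : ℝ) * (stirling2 n k) * (-t) ^ k / (1 + t) ^ (k + 1)

open Finset

lemma stirling2_zero_succ (k : ℕ) : stirling2 0 (k+1) = 0 := rfl
lemma stirling2_succ_zero (n : ℕ) : stirling2 (n+1) 0 = 0 := rfl
lemma stirling2_succ_succ (n k : ℕ) :
    stirling2 (n+1) (k+1) = (k + 1) * stirling2 n (k + 1) + stirling2 n k := rfl

lemma stirling2_eq_zero_of_lt : ∀ n k, n < k → stirling2 n k = 0 := by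
  intro n
  induction n with
  | zero => intro k hk; cases k with
    | zero => omega
    | succ k => rfl
  | succ n ih => intro k hk; cases k with
    | zero => omega
    | succ k =>
      rw [stirling2_succ_succ, ih (k+1) (by omega), ih k (by omega)]
      simp

lemma stirling2_succ_one (n : ℕ) : stirling2 (n+1) 1 = 1 := by
  induction n with
  | zero => rfl
  | succ n ih => rw [stirling2_succ_succ, ih]; rfl

lemma stirling2_binom (n i : ℕ) :
    stirling2 (n+1) (i+1) = ∑ k ∈ range (n+1), n.choose k * stirling2 k i := by
  induction n generalizing i with
  | zero =>
    cases i with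
    | zero => rfl
    | succ i => simp [stirling2_zero_succ, stirling2_succ_succ]
  | succ n ih =>
    have key : ∑ k ∈ range (n+2), (n+1).choose k * stirling2 k i
        = ∑ k ∈ range (n+1), n.choose k * stirling2 (k+1) i
          + ∑ k ∈ range (n+1), n.choose k * stirling2 k i := by
      rw [sum_range_succ' (fun k => (n+1).choose k * stirling2 k i) (n+1)]
      have h1 : ∀ k, (n+1).choose (k+1) * stirling2 (k+1) i
          = n.choose k * stirling2 (k+1) i + n.choose (k+1) * stirling2 (k+1) i := by
        intro k; rw [Nat.choose_succ_succ, add_mul]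
      simp_rw [h1]
      rw [sum_add_distrib]
      have h2 : ∑ k ∈ range (n+1), n.choose (k+1) * stirling2 (k+1) i
          + n.choose 0 * stirling2 0 i
          = ∑ k ∈ range (n+1), n.choose k * stirling2 k i := by
        have h3 := sum_range_succ' (fun k => n.choose k * stirling2 k i) n
        have h4 : ∑ k ∈ range (n+1), n.choose (k+1) * stirling2 (k+1) i
            = ∑ k ∈ range n, n.choose (k+1) * stirling2 (k+1) i := by
          rw [sum_range_succ, Nat.choose_succ_self, zero_mul, add_zero]
        simp only [h3, h4]
      simp only [Nat.choose_zero_right, one_mul] at h2 ⊢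
      omega
    rw [key]
    cases i with
    | zero =>
      have hz : ∀ k ∈ range (n+1), n.choose k * stirling2 (k+1) 0 = 0 := by
        intro k _; rw [stirling2_succ_zero, mul_zero]
      rw [sum_congr rfl hz, Finset.sum_const_zero, zero_add]
      have h0 : ∑ k ∈ range (n+1), n.choose k * stirling2 k 0 = 1 := by
        rw [sum_range_succ' (fun k => n.choose k * stirling2 k 0) n]
        have : ∀ k ∈ range n, n.choose (k+1) * stirling2 (k+1) 0 = 0 := by
          intro k _; rw [stirling2_succ_zero, mul_zero]
        rw [sum_congr rfl this]
        simp [stirling2]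
      rw [h0]
      exact stirling2_succ_one (n+1)
    | succ j =>
      have hs : ∀ k ∈ range (n+1), n.choose k * stirling2 (k+1) (j+1)
          = (j+1) * (n.choose k * stirling2 k (j+1)) + n.choose k * stirling2 k j := by
        intro k _; rw [stirling2_succ_succ]; ring
      rw [sum_congr rfl hs, sum_add_distrib, ← Finset.mul_sum, ← ih, ← ih, stirling2_succ_succ]
      ring

/-- `cber n = ∑ (-1)^i i!/(i+1) S(n,i)`, the explicit formula for Bernoulli numbers. -/
def cber (n : ℕ) : ℚ :=
  ∑ i ∈ range (n+1), (-1)^i * (i.factorial : ℚ) / (i+1) * stirling2 n i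

lemma e_lemma (n : ℕ) :
    ∑ i ∈ range (n+1), ((-1)^i * (i.factorial : ℚ) * stirling2 n (i+1))
      = if n = 1 then 1 else 0 := by
  induction n with
  | zero => simp [stirling2_zero_succ]
  | succ n _ =>
    have hterm : ∀ i ∈ range (n+2),
        ((-1:ℚ)^i * (i.factorial : ℚ) * stirling2 (n+1) (i+1))
        = (-1)^i * ((i+1).factorial : ℚ) * stirling2 n (i+1)
          + (-1)^i * (i.factorial : ℚ) * stirling2 n i := by
      intro i _
      rw [stirling2_succ_succ n i]
      push_cast [Nat.factorial_succ]
      ring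
    rw [sum_congr rfl hterm, sum_add_distrib]
    have hA : ∑ i ∈ range (n+2), ((-1:ℚ)^i * ((i+1).factorial : ℚ) * stirling2 n (i+1))
        = ∑ i ∈ range (n+1), ((-1:ℚ)^i * ((i+1).factorial : ℚ) * stirling2 n (i+1)) := by
      rw [sum_range_succ, stirling2_eq_zero_of_lt n (n+2) (by omega)]
      simp
    have hB : ∑ i ∈ range (n+2), ((-1:ℚ)^i * (i.factorial : ℚ) * stirling2 n i)
        = ∑ i ∈ range (n+1), ((-1:ℚ)^(i+1) * ((i+1).factorial : ℚ) * stirling2 n (i+1))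
          + stirling2 n 0 := by
      rw [sum_range_succ' (fun i => ((-1:ℚ)^i * (i.factorial : ℚ) * stirling2 n i)) (n+1)]
      simp
    rw [hA, hB]
    have hcancel : ∀ i ∈ range (n+1),
        ((-1:ℚ)^(i+1) * ((i+1).factorial : ℚ) * stirling2 n (i+1))
        = -((-1:ℚ)^i * ((i+1).factorial : ℚ) * stirling2 n (i+1)) := by
      intro i _; ring
    rw [sum_congr rfl hcancel, sum_neg_distrib]
    cases n with
    | zero => simp [stirling2]
    | succ n => simp [stirling2_succ_zero]

lemma sum_choose_cber (n : ℕ) :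
    ∑ k ∈ range (n+1), (n.choose k : ℚ) * cber k
      = cber n + (if n = 1 then 1 else 0) := by
  have hext : ∀ k ∈ range (n+1),
      (n.choose k : ℚ) * cber k
      = ∑ i ∈ range (n+1),
          (-1)^i * (i.factorial : ℚ) / (i+1) * ((n.choose k : ℚ) * stirling2 k i) := by
    intro k hk
    rw [mem_range] at hk
    rw [cber, Finset.mul_sum]
    rw [← Finset.sum_subset (Finset.range_subset_range.2 (by omega : k+1 ≤ n+1))]
    · exact sum_congr rfl (fun i _ => by ring)
    · intro i _ hi
      rw [mem_range, not_lt] at hi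
      rw [stirling2_eq_zero_of_lt k i (by omega)]
      simp
  rw [sum_congr rfl hext, Finset.sum_comm]
  have hswap : ∀ i ∈ range (n+1),
      ∑ k ∈ range (n+1),
          (-1)^i * (i.factorial : ℚ) / (i+1) * ((n.choose k : ℚ) * stirling2 k i)
      = (-1)^i * (i.factorial : ℚ) / (i+1) * stirling2 (n+1) (i+1) := by
    intro i _
    rw [← Finset.mul_sum]
    congr 1
    have := stirling2_binom n i
    have hcast : ((stirling2 (n+1) (i+1) : ℕ) : ℚ)
        = ((∑ k ∈ range (n+1), n.choose k * stirling2 k i : ℕ) : ℚ) := by rw [this]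
    push_cast at hcast
    rw [hcast]
  rw [sum_congr rfl hswap]
  have hterm : ∀ i ∈ range (n+1),
      ((-1:ℚ)^i * (i.factorial : ℚ) / (i+1) * stirling2 (n+1) (i+1))
      = (-1)^i * (i.factorial : ℚ) * stirling2 n (i+1)
        + (-1)^i * (i.factorial : ℚ) / (i+1) * stirling2 n i := by
    intro i _
    rw [stirling2_succ_succ n i]
    have h1 : ((i:ℚ)+1) ≠ 0 := by positivity
    push_cast
    field_simp
  rw [sum_congr rfl hterm, sum_add_distrib, e_lemma n, cber]
  ring

lemma sum_choose_cber' (n : ℕ) :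
    ∑ k ∈ range n, (n.choose k : ℚ) * cber k = if n = 1 then 1 else 0 := by
  have h := sum_choose_cber n
  rw [sum_range_succ, Nat.choose_self] at h
  push_cast at h
  linarith

lemma cber_eq_bernoulli (n : ℕ) : cber n = bernoulli n := by
  induction n using Nat.strong_induction_on with
  | _ n ih =>
    have h1 := sum_choose_cber' (n+1)
    have h2 := sum_bernoulli (n+1)
    have h3 : ∑ k ∈ range (n+1), ((n+1).choose k : ℚ) * (cber k - bernoulli k) = 0 := by
      have : ∀ k ∈ range (n+1), ((n+1).choose k : ℚ) * (cber k - bernoulli k)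
          = ((n+1).choose k : ℚ) * cber k - ((n+1).choose k : ℚ) * bernoulli k := by
        intro k _; ring
      rw [sum_congr rfl this, Finset.sum_sub_distrib, h1, h2]
      ring
    rw [sum_range_succ] at h3
    have h4 : ∀ k ∈ range n, ((n+1).choose k : ℚ) * (cber k - bernoulli k) = 0 := by
      intro k hk
      rw [mem_range] at hk
      rw [ih k hk]
      ring
    rw [sum_congr rfl h4, Finset.sum_const_zero, zero_add, Nat.choose_succ_self_right] at h3
    have h6 : ((n:ℚ)+1) * (cber n - bernoulli n) = 0 := by push_cast at h3; linarith
    rcases mul_eq_zero.1 h6 with h | h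
    · exact absurd h (by positivity)
    · linarith

/-- The double sum expressing the integral. -/
def Jq (m n : ℕ) : ℚ :=
  ∑ j ∈ range (m+1), ∑ k ∈ range (n+1),
    (-1)^(j+k) * (j.factorial : ℚ)^2 * (k.factorial : ℚ)^2
      * stirling2 m j * stirling2 n k / (j+k+1).factorial

lemma Jq_inner (n j : ℕ) :
    ∑ k ∈ range (n+2),
        ((-1:ℚ)^k * (k.factorial : ℚ)^2 * stirling2 (n+1) k / ((j+k+1).factorial : ℚ))
      = ∑ k ∈ range (n+1),
        ((-1:ℚ)^k * (k.factorial : ℚ)^2 * stirling2 n k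
          * ((j:ℚ)*k - 1) / ((j+k+2).factorial : ℚ)) := by
  rw [sum_range_succ' (fun k =>
    ((-1:ℚ)^k * (k.factorial : ℚ)^2 * stirling2 (n+1) k / ((j+k+1).factorial : ℚ))) (n+1)]
  rw [stirling2_succ_zero]
  have hterm : ∀ k ∈ range (n+1),
      ((-1:ℚ)^(k+1) * ((k+1).factorial : ℚ)^2 * stirling2 (n+1) (k+1)
          / ((j+(k+1)+1).factorial : ℚ))
      = -((-1:ℚ)^k * ((k+1).factorial : ℚ)^2 * (k+1) * stirling2 n (k+1)
          / ((j+k+2).factorial : ℚ))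
        - (-1:ℚ)^k * ((k+1).factorial : ℚ)^2 * stirling2 n k / ((j+k+2).factorial : ℚ) := by
    intro k _
    have harg : j+(k+1)+1 = j+k+2 := by omega
    rw [harg, stirling2_succ_succ n k]
    push_cast
    ring
  rw [sum_congr rfl hterm]
  simp only [sub_eq_add_neg, sum_add_distrib]
  set g : ℕ → ℚ := fun k : ℕ => (-1:ℚ)^k * (k.factorial : ℚ)^2 * (k:ℚ) * stirling2 n k
      / ((j+k+1).factorial : ℚ) with hg_def
  have hA : ∑ k ∈ range (n+1),
      -((-1:ℚ)^k * ((k+1).factorial : ℚ)^2 * ((k:ℚ)+1) * stirling2 n (k+1)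
          / ((j+k+2).factorial : ℚ))
      = ∑ k ∈ range (n+1),
        ((-1:ℚ)^k * (k.factorial : ℚ)^2 * (k:ℚ) * stirling2 n k
          * ((j:ℚ)+k+2) / ((j+k+2).factorial : ℚ)) := by
    have hg2 : ∀ k ∈ range (n+1),
        -((-1:ℚ)^k * ((k+1).factorial : ℚ)^2 * ((k:ℚ)+1) * stirling2 n (k+1)
            / ((j+k+2).factorial : ℚ)) = g (k+1) := by
      intro k _
      rw [hg_def]
      simp only
      have harg : j+(k+1)+1 = j+k+2 := by omega
      rw [harg]
      push_cast
      ring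
    rw [sum_congr rfl hg2]
    have e1 := sum_range_succ' g (n+1)
    have e2 := sum_range_succ g (n+1)
    have hg0 : g 0 = 0 := by rw [hg_def]; simp
    have hgtop : g (n+1) = 0 := by
      rw [hg_def]; simp [stirling2_eq_zero_of_lt n (n+1) (by omega)]
    have e3 : ∑ x ∈ range (n+1), g (x+1) = ∑ x ∈ range (n+1), g x := by
      linarith [e1, e2, hg0, hgtop]
    rw [e3]
    refine sum_congr rfl (fun k hk => ?_)
    rw [hg_def]
    simp only
    have hfac : ((j+k+2).factorial : ℚ) = ((j:ℚ)+k+2) * ((j+k+1).factorial : ℚ) := by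
      have harg : (j+k+2) = (j+k+1) + 1 := by omega
      rw [harg, Nat.factorial_succ]
      push_cast; ring
    rw [hfac]
    have h1 : ((j:ℚ)+k+2) ≠ 0 := by positivity
    have h2 : ((j+k+1).factorial : ℚ) ≠ 0 :=
      Nat.cast_ne_zero.2 (Nat.factorial_ne_zero _)
    field_simp
  rw [hA, ← sum_add_distrib]
  simp only [Nat.cast_zero, mul_zero, zero_mul, zero_div, add_zero]
  refine sum_congr rfl (fun k hk => ?_)
  have h2 : ((j+k+2).factorial : ℚ) ≠ 0 :=
    Nat.cast_ne_zero.2 (Nat.factorial_ne_zero _)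
  have hfac1 : (((k+1).factorial : ℚ)) = ((k:ℚ)+1) * (k.factorial : ℚ) := by
    rw [Nat.factorial_succ]; push_cast; ring
  rw [hfac1]
  field_simp
  ring

/-- Both `Jq m (n+1)` and `Jq (m+1) n` equal this symmetric expression. -/
def Dq (m n : ℕ) : ℚ :=
  ∑ j ∈ range (m+1), ∑ k ∈ range (n+1),
    (-1)^(j+k) * (j.factorial : ℚ)^2 * (k.factorial : ℚ)^2
      * stirling2 m j * stirling2 n k * ((j:ℚ)*(k:ℚ) - 1) / ((j+k+2).factorial : ℚ)

lemma Jq_right (m n : ℕ) : Jq m (n+1) = Dq m n := by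
  unfold Jq Dq
  refine sum_congr rfl (fun j hj => ?_)
  have h1 : ∑ k ∈ range (n+2),
      ((-1:ℚ)^(j+k) * (j.factorial : ℚ)^2 * (k.factorial : ℚ)^2
        * stirling2 m j * stirling2 (n+1) k / ((j+k+1).factorial : ℚ))
      = ((-1:ℚ)^j * (j.factorial : ℚ)^2 * stirling2 m j)
        * ∑ k ∈ range (n+2),
          ((-1:ℚ)^k * (k.factorial : ℚ)^2 * stirling2 (n+1) k / ((j+k+1).factorial : ℚ)) := by
    rw [Finset.mul_sum]
    refine sum_congr rfl (fun k _ => ?_)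
    rw [pow_add]
    ring
  rw [h1, Jq_inner n j, Finset.mul_sum]
  refine sum_congr rfl (fun k _ => ?_)
  rw [pow_add]
  ring

lemma Jq_left (m n : ℕ) : Jq (m+1) n = Dq m n := by
  unfold Jq Dq
  rw [Finset.sum_comm]
  rw [Finset.sum_comm (s := range (m+1))]
  refine sum_congr rfl (fun k hk => ?_)
  have h1 : ∑ j ∈ range (m+2),
      ((-1:ℚ)^(j+k) * (j.factorial : ℚ)^2 * (k.factorial : ℚ)^2
        * stirling2 (m+1) j * stirling2 n k / ((j+k+1).factorial : ℚ))
      = ((-1:ℚ)^k * (k.factorial : ℚ)^2 * stirling2 n k)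
        * ∑ j ∈ range (m+2),
          ((-1:ℚ)^j * (j.factorial : ℚ)^2 * stirling2 (m+1) j / ((k+j+1).factorial : ℚ)) := by
    rw [Finset.mul_sum]
    refine sum_congr rfl (fun j _ => ?_)
    have harg : j+k+1 = k+j+1 := by omega
    rw [harg, pow_add]
    ring
  rw [h1, Jq_inner m k, Finset.mul_sum]
  refine sum_congr rfl (fun j _ => ?_)
  have harg : k+j+2 = j+k+2 := by omega
  rw [harg, pow_add]
  ring

lemma Jq_zero_left (n : ℕ) : Jq 0 n = cber n := by
  unfold Jq cber
  rw [sum_range_one]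
  refine sum_congr rfl (fun k hk => ?_)
  show ((-1:ℚ))^(0+k) * _ * _ * (stirling2 0 0 : ℚ) * _ / ((0+k+1).factorial : ℚ) = _
  have h0 : stirling2 0 0 = 1 := rfl
  have harg : 0+k+1 = k+1 := by omega
  rw [h0, harg, zero_add, Nat.factorial_succ]
  have h1 : ((k:ℚ)+1) ≠ 0 := by positivity
  have h2 : ((k.factorial : ℚ)) ≠ 0 := Nat.cast_ne_zero.2 (Nat.factorial_ne_zero _)
  push_cast
  field_simp
  ring

lemma Jq_eq_bernoulli (m n : ℕ) : Jq m n = bernoulli (m+n) := by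
  induction m generalizing n with
  | zero => rw [Jq_zero_left, cber_eq_bernoulli, zero_add]
  | succ m ih =>
    rw [Jq_left m n, ← Jq_right m n, ih (n+1)]
    congr 1
    omega

open intervalIntegral

lemma Ibeta (j : ℕ) : ∀ k : ℕ, ∫ x in (0:ℝ)..1, x^k * (1-x)^j
    = (k.factorial : ℝ) * (j.factorial : ℝ) / ((k+j+1).factorial : ℝ) := by
  induction j with
  | zero =>
    intro k
    simp only [pow_zero, mul_one, integral_pow]
    have : k + 0 + 1 = k + 1 := by omega
    rw [this, Nat.factorial_succ]
    have h2 : ((k.factorial : ℝ)) ≠ 0 := Nat.cast_ne_zero.2 (Nat.factorial_ne_zero _)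
    push_cast
    rw [one_pow, zero_pow (by omega), sub_zero]
    field_simp
    simp
  | succ j ih =>
    intro k
    have hkpos : ((k:ℝ)+1) ≠ 0 := by positivity
    have hu : ∀ x ∈ Set.uIcc (0:ℝ) 1,
        HasDerivAt (fun x : ℝ => (1-x)^(j+1)) (-(((j:ℝ)+1) * (1-x)^j)) x := by
      intro x _
      have h := ((hasDerivAt_id x).const_sub 1).pow (j+1)
      simpa [Pi.pow_def] using h.neg.neg
    have hv : ∀ x ∈ Set.uIcc (0:ℝ) 1,
        HasDerivAt (fun x : ℝ => x^(k+1)/((k:ℝ)+1)) (x^k) x := by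
      intro x _
      have h := (hasDerivAt_pow (k+1) x).div_const ((k:ℝ)+1)
      have : (↑(k + 1) * x ^ (k + 1 - 1)) / ((k:ℝ)+1) = x ^ k := by
        push_cast
        field_simp
      rwa [this] at h
    have hu' : IntervalIntegrable (fun x : ℝ => -(((j:ℝ)+1) * (1-x)^j)) MeasureTheory.volume 0 1 :=
      (Continuous.intervalIntegrable (by continuity) 0 1)
    have hv' : IntervalIntegrable (fun x : ℝ => x^k) MeasureTheory.volume 0 1 :=
      (Continuous.intervalIntegrable (by continuity) 0 1)
    have key := integral_mul_deriv_eq_deriv_mul hu hv hu' hv'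
    have hl : ∫ x in (0:ℝ)..1, x^k * (1-x)^(j+1)
        = ∫ x in (0:ℝ)..1, (1-x)^(j+1) * x^k := by
      refine integral_congr (fun x _ => ?_); ring
    rw [hl, key]
    have hr : ∫ x in (0:ℝ)..1, -(((j:ℝ)+1) * (1-x)^j) * (x^(k+1)/((k:ℝ)+1))
        = (-((j:ℝ)+1)/((k:ℝ)+1)) * ∫ x in (0:ℝ)..1, x^(k+1) * (1-x)^j := by
      rw [← intervalIntegral.integral_const_mul]
      refine integral_congr (fun x _ => ?_)
      field_simp
    rw [hr, ih (k+1)]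
    have harg1 : k + 1 + j + 1 = k + (j+1) + 1 := by omega
    rw [harg1]
    have h2 : ((k + (j+1) + 1).factorial : ℝ) ≠ 0 := Nat.cast_ne_zero.2 (Nat.factorial_ne_zero _)
    rw [Nat.factorial_succ (k), Nat.factorial_succ (j)]
    push_cast
    rw [sub_zero, one_pow, zero_pow (by omega), zero_div]
    field_simp
    ring

open MeasureTheory Set

theorem integral_polylog_product_eq_bernoulli (m n : ℕ) :
    MeasureTheory.IntegrableOn (fun t : ℝ => (1 / t) * F m (1 / t) * F n t)
      (Set.Ioi 0) ∧
    ∫ t in Set.Ioi (0 : ℝ), (1 / t) * F m (1 / t) * F n t =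
      (bernoulli (m + n) : ℝ) := by
  set f : ℝ → ℝ := fun t => (1 / t) * F m (1 / t) * F n t with hf_def
  set φ : ℝ → ℝ := fun u => u / (1 - u) with hφ_def
  set T : ℕ → ℕ → ℝ → ℝ := fun j k u =>
      ((j.factorial : ℝ) * (stirling2 m j)) * ((k.factorial : ℝ) * (stirling2 n k))
        * ((-1:ℝ))^(j+k) * (1-u)^j * u^k with hT_def
  set P : ℝ → ℝ := fun u => ∑ j ∈ range (m+1), ∑ k ∈ range (n+1), T j k u with hP_def
  have hs : MeasurableSet (Ioo (0:ℝ) 1) := measurableSet_Ioo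
  have hφ' : ∀ u ∈ Ioo (0:ℝ) 1, HasDerivWithinAt φ (((1-u)^2)⁻¹) (Ioo (0:ℝ) 1) u := by
    intro u hu
    have h1u : (1:ℝ) - u ≠ 0 := by
      have := hu.2; intro h; rw [sub_eq_zero] at h; rw [← h] at this; exact lt_irrefl _ this
    have h := (hasDerivAt_id u).div ((hasDerivAt_id u).const_sub 1) h1u
    simp only [id_eq] at h
    have heq : (1 * (1 - u) - u * (-1)) / ((1 - u)^2) = ((1-u)^2)⁻¹ := by
      rw [show (1 * (1 - u) - u * (-1)) = 1 by ring, one_div]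
    rw [heq] at h
    exact h.hasDerivWithinAt
  have hinj : InjOn φ (Ioo (0:ℝ) 1) := by
    intro a ha b hb h
    have h1a : (0:ℝ) < 1 - a := by linarith [ha.2]
    have h1b : (0:ℝ) < 1 - b := by linarith [hb.2]
    simp only [hφ_def] at h
    rw [div_eq_div_iff (ne_of_gt h1a) (ne_of_gt h1b)] at h
    nlinarith [h]
  have himg : φ '' (Ioo (0:ℝ) 1) = Ioi (0:ℝ) := by
    refine Set.ext (fun t => ⟨?_, ?_⟩)
    · rintro ⟨u, hu, rfl⟩
      exact mem_Ioi.2 (div_pos hu.1 (by linarith [hu.2]))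
    · intro ht
      have ht0 : (0:ℝ) < t := ht
      have h1t : (0:ℝ) < 1 + t := by linarith
      refine ⟨t/(1+t), ⟨div_pos ht0 h1t, (div_lt_one h1t).2 (by linarith)⟩, ?_⟩
      simp only [hφ_def]
      rw [div_eq_iff]
      · field_simp; ring
      · intro hc
        rw [sub_eq_zero] at hc
        rw [eq_comm, div_eq_one_iff_eq (ne_of_gt h1t)] at hc
        linarith
  have hpt : ∀ u ∈ Ioo (0:ℝ) 1, |((1-u)^2)⁻¹| • f (φ u) = P u := by
    intro u hu
    obtain ⟨hu0, hu1⟩ := hu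
    have h1u : (0:ℝ) < 1 - u := by linarith
    have h1u' : (1:ℝ) - u ≠ 0 := ne_of_gt h1u
    have hune : u ≠ 0 := ne_of_gt hu0
    have habs : |((1-u)^2)⁻¹| = ((1-u)^2)⁻¹ := abs_of_pos (by positivity)
    rw [smul_eq_mul, habs]
    have hφu : φ u = u / (1-u) := rfl
    have hinv : 1 / φ u = (1-u) / u := by rw [hφu, one_div_div]
    have h1 : 1 + φ u = (1-u)⁻¹ := by rw [hφu]; field_simp; ring
    have h2 : 1 + (1-u)/u = u⁻¹ := by field_simp; ring
    have hFn : F n (φ u) = ∑ k ∈ range (n+1),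
        (k.factorial : ℝ) * (stirling2 n k) * (-u)^k * (1-u) := by
      simp only [F]
      refine sum_congr rfl (fun k _ => ?_)
      rw [h1, hφu]
      rw [show (-(u/(1-u)))^k = (-u)^k / (1-u)^k by rw [← neg_div, div_pow]]
      rw [show ((1-u)⁻¹)^(k+1) = ((1-u)^(k+1))⁻¹ by rw [inv_pow]]
      rw [div_inv_eq_mul]
      field_simp
      ring
    have hFm : F m ((1-u)/u) = ∑ j ∈ range (m+1),
        (j.factorial : ℝ) * (stirling2 m j) * (-(1-u))^j * u := by
      simp only [F]
      refine sum_congr rfl (fun j _ => ?_)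
      rw [h2]
      rw [show (-((1-u)/u))^j = (-(1-u))^j / u^j by rw [← neg_div, div_pow]]
      rw [show (u⁻¹)^(j+1) = (u^(j+1))⁻¹ by rw [inv_pow]]
      rw [div_inv_eq_mul]
      field_simp
      ring
    have hstep : ((1-u)^2)⁻¹ * f (φ u)
        = ((1-u)^2)⁻¹ * ((1-u)/u
          * ((∑ j ∈ range (m+1), (j.factorial : ℝ) * (stirling2 m j) * (-(1-u))^j * u)
            * (∑ k ∈ range (n+1), (k.factorial : ℝ) * (stirling2 n k) * (-u)^k * (1-u)))) := by
      simp only [hf_def]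
      rw [hinv, hFm, hFn]
      ring
    rw [hstep, sum_mul_sum, Finset.mul_sum, Finset.mul_sum]
    simp only [Finset.mul_sum]
    simp only [hP_def, hT_def]
    refine sum_congr rfl (fun j _ => sum_congr rfl (fun k _ => ?_))
    rw [show (-(1-u))^j = (-1:ℝ)^j * (1-u)^j by rw [neg_pow]]
    rw [show (-u)^k = (-1:ℝ)^k * u^k by rw [neg_pow]]
    rw [pow_add]
    field_simp
  have hPcont : Continuous P := by
    refine continuous_finset_sum _ (fun j _ => continuous_finset_sum _ (fun k _ => ?_))
    fun_prop
  have hPint : IntegrableOn P (Ioo (0:ℝ) 1) :=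
    (hPcont.integrableOn_Icc (a := 0) (b := 1)).mono_set Ioo_subset_Icc_self
  have key1 := integrableOn_image_iff_integrableOn_abs_deriv_smul hs hφ' hinj f
  have key2 := integral_image_eq_integral_abs_deriv_smul hs hφ' hinj f
  rw [himg] at key1 key2
  have hint : IntegrableOn f (Ioi (0:ℝ)) := by
    rw [key1]
    exact hPint.congr_fun (fun u hu => (hpt u hu).symm) hs
  refine ⟨hint, ?_⟩
  rw [key2, setIntegral_congr_fun hs hpt]
  have hIoo : ∫ u in Ioo (0:ℝ) 1, P u = ∫ u in (0:ℝ)..1, P u := by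
    rw [intervalIntegral.integral_of_le zero_le_one, integral_Ioc_eq_integral_Ioo]
  rw [hIoo]
  have hii : ∀ (g : ℝ → ℝ), Continuous g → IntervalIntegrable g volume 0 1 :=
    fun g hg => hg.intervalIntegrable 0 1
  have hTcont : ∀ j k, Continuous (T j k) := by
    intro j k; simp only [hT_def]; fun_prop
  have hPval : ∫ u in (0:ℝ)..1, P u = ∑ j ∈ range (m+1), ∑ k ∈ range (n+1),
      ((j.factorial : ℝ) * (stirling2 m j)) * ((k.factorial : ℝ) * (stirling2 n k))
        * ((-1:ℝ))^(j+k) * ((k.factorial : ℝ) * (j.factorial : ℝ) / ((k+j+1).factorial : ℝ)) := by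
    have e1 : ∫ u in (0:ℝ)..1, P u
        = ∑ j ∈ range (m+1), ∫ u in (0:ℝ)..1, ∑ k ∈ range (n+1), T j k u := by
      simp only [hP_def]
      exact intervalIntegral.integral_finset_sum
        (fun j _ => hii _ (continuous_finset_sum _ (fun k _ => hTcont j k)))
    rw [e1]
    refine sum_congr rfl (fun j _ => ?_)
    rw [intervalIntegral.integral_finset_sum (fun k _ => hii _ (hTcont j k))]
    refine sum_congr rfl (fun k _ => ?_)
    have e2 : ∀ u : ℝ, T j k u
        = (((j.factorial : ℝ) * (stirling2 m j)) * ((k.factorial : ℝ) * (stirling2 n k))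
          * ((-1:ℝ))^(j+k)) * (u^k * (1-u)^j) := by
      intro u; simp only [hT_def]; ring
    simp_rw [e2]
    rw [intervalIntegral.integral_const_mul, Ibeta j k]
  rw [hPval, ← Jq_eq_bernoulli m n]
  have hcast : ((Jq m n : ℚ) : ℝ) = ∑ j ∈ range (m+1), ∑ k ∈ range (n+1),
      ((-1:ℝ))^(j+k) * (j.factorial : ℝ)^2 * (k.factorial : ℝ)^2
      * (stirling2 m j : ℝ) * (stirling2 n k : ℝ) / ((j+k+1).factorial : ℝ) := by
    rw [Jq]
    push_cast
    rfl
  rw [hcast]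
  refine sum_congr rfl (fun j _ => sum_congr rfl (fun k _ => ?_))
  have harg : k + j + 1 = j + k + 1 := by omega
  rw [harg]
  ring
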